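/- Let P and Q be probability measures with continuous positive densities f = α_f·exp(-β·d(·, x₀)) and g = α_g·exp(-β·d(·, x₁)) on a compact metric measure space, with α_f ≥ α_g, and suppose D = d(x₀, x₁) > 0 is small enough that the ball A of radius D/(3β) around x₀ (on which β·d(·, x₁) ≥ 2D/3) has μ(A) = c·D^n and e^{-D/3} - e^{-2D/3} ≥ D/6. Then KL(P, Q) ≥ 2·α_g²·c²·D^{2n+2}/36. -/

import Mathlib

set_option maxHeartbeats 1000000

open MeasureTheory

/-- `(t+1) log t - 2(t-1)` is monotone on `(0,∞)`. -/
lemma psi_mono : MonotoneOn (fun t : ℝ => (t + 1) * Real.log t - 2 * (t - 1)) (Set.Ioi 0) := by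
  have hderiv : ∀ t : ℝ, 0 < t →
      HasDerivAt (fun t : ℝ => (t + 1) * Real.log t - 2 * (t - 1))
        (Real.log t + (t + 1) * t⁻¹ - 2) t := by
    intro t ht
    have h1 : HasDerivAt (fun t : ℝ => (t + 1) * Real.log t)
        (1 * Real.log t + (t + 1) * t⁻¹) t :=
      ((hasDerivAt_id t).add_const 1).mul (Real.hasDerivAt_log ht.ne')
    have h2 : HasDerivAt (fun t : ℝ => 2 * (t - 1)) 2 t := by
      simpa using ((hasDerivAt_id t).sub_const 1).const_mul 2
    have h3 := h1.sub h2
    rw [one_mul] at h3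
    exact h3
  apply monotoneOn_of_deriv_nonneg (convex_Ioi 0)
  · intro t ht
    exact ((hderiv t ht).continuousAt).continuousWithinAt
  · intro t ht
    rw [interior_Ioi] at ht
    exact ((hderiv t ht).differentiableAt).differentiableWithinAt
  · intro t ht
    rw [interior_Ioi] at ht
    have ht' : (0:ℝ) < t := ht
    rw [(hderiv t ht).deriv]
    have hlog : 1 - t⁻¹ ≤ Real.log t := by
      have := Real.log_le_sub_one_of_pos (x := t⁻¹) (by positivity)
      rw [Real.log_inv] at this
      linarith
    have h5 : (t + 1) * t⁻¹ = 1 + t⁻¹ := by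
      rw [add_mul, mul_inv_cancel₀ ht'.ne', one_mul]
    rw [h5]; linarith

lemma key_t (t : ℝ) (ht : 0 < t) :
    3 * (t - 1) ^ 2 ≤ (2 * t + 4) * (t * Real.log t - t + 1) := by
  set φ : ℝ → ℝ := fun t => (2 * t + 4) * (t * Real.log t - t + 1) - 3 * (t - 1) ^ 2 with hφ
  have hderiv : ∀ t : ℝ, 0 < t →
      HasDerivAt φ (4 * ((t + 1) * Real.log t - 2 * (t - 1))) t := by
    intro t ht
    have h1 : HasDerivAt (fun t : ℝ => t * Real.log t - t + 1) (Real.log t) t := by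
      simpa using ((Real.hasDerivAt_mul_log ht.ne').sub (hasDerivAt_id t)).add_const 1
    have h2 : HasDerivAt (fun t : ℝ => 2 * t + 4) 2 t := by
      simpa using ((hasDerivAt_id t).const_mul 2).add_const 4
    have h3 : HasDerivAt (fun t : ℝ => (2 * t + 4) * (t * Real.log t - t + 1))
        (2 * (t * Real.log t - t + 1) + (2 * t + 4) * Real.log t) t := h2.mul h1
    have h4 : HasDerivAt (fun t : ℝ => 3 * (t - 1) ^ 2) (3 * (2 * (t - 1) ^ 1 * 1)) t :=
      (((hasDerivAt_id t).sub_const 1).pow 2).const_mul 3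
    have := h3.sub h4
    exact this.congr_deriv (by ring)
  have hcont : ∀ t : ℝ, 0 < t → ContinuousAt φ t := fun t ht => (hderiv t ht).continuousAt
  have hφ1 : φ 1 = 0 := by simp [hφ]
  rcases le_total 1 t with h1t | ht1
  · -- monotone on Ici 1
    have hmono : MonotoneOn φ (Set.Ici 1) := by
      apply monotoneOn_of_deriv_nonneg (convex_Ici 1)
      · intro s hs; exact (hcont s (lt_of_lt_of_le one_pos hs)).continuousWithinAt
      · intro s hs; rw [interior_Ici] at hs
        exact ((hderiv s (lt_trans one_pos hs)).differentiableAt).differentiableWithinAt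
      · intro s hs
        rw [interior_Ici] at hs
        rw [(hderiv s (lt_trans one_pos hs)).deriv]
        have := psi_mono (Set.mem_Ioi.2 one_pos) (Set.mem_Ioi.2 (lt_trans one_pos hs)) hs.le
        simp only [Real.log_one] at this
        nlinarith [this]
    have := hmono (Set.mem_Ici.2 le_rfl) (Set.mem_Ici.2 h1t) h1t
    rw [hφ1] at this
    simpa [hφ] using this
  · -- antitone on Ioc 0 1
    have hmono : AntitoneOn φ (Set.Ioc 0 1) := by
      apply antitoneOn_of_deriv_nonpos (convex_Ioc 0 1)
      · intro s hs; exact (hcont s hs.1).continuousWithinAt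
      · intro s hs; rw [interior_Ioc] at hs
        exact ((hderiv s hs.1).differentiableAt).differentiableWithinAt
      · intro s hs
        rw [interior_Ioc] at hs
        rw [(hderiv s hs.1).deriv]
        have := psi_mono (Set.mem_Ioi.2 hs.1) (Set.mem_Ioi.2 one_pos) hs.2.le
        simp only [Real.log_one] at this
        nlinarith [this]
    have := hmono (Set.mem_Ioc.2 ⟨ht, ht1⟩) (Set.mem_Ioc.2 ⟨one_pos, le_rfl⟩) ht1
    rw [hφ1] at this
    simpa [hφ] using this

lemma key_xy (x y : ℝ) (hx : 0 < x) (hy : 0 < y) :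
    3 * (x - y) ^ 2 ≤ (2 * x + 4 * y) * (x * Real.log (x / y) - x + y) := by
  have ht : 0 < x / y := by positivity
  have h := key_t (x / y) ht
  have hxy : x = (x / y) * y := by field_simp
  have h2 := mul_le_mul_of_nonneg_left h (le_of_lt (mul_pos hy hy))
  calc 3 * (x - y) ^ 2 = (y * y) * (3 * (x / y - 1) ^ 2) := by
        field_simp
    _ ≤ (y * y) * ((2 * (x / y) + 4) * ((x / y) * Real.log (x / y) - (x / y) + 1)) := h2
    _ = (2 * x + 4 * y) * (x * Real.log (x / y) - x + y) := by
        field_simp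



/-- Polynomial KL lower bound for the exponential model: under the stated
separation, volume and elementary-inequality hypotheses,
`KL(P, Q) ≥ 2 α_g² c² D^{2n+2} / 36`. -/
theorem kl_polynomial_lower_bound {Ω : Type*} [MetricSpace Ω] [CompactSpace Ω]
    [MeasurableSpace Ω] (μ : Measure Ω) (x₀ x₁ : Ω) (β : ℝ) (hβ : 0 < β)
    (αf αg : ℝ) (hαg : 0 < αg) (hα : αg ≤ αf)
    (n : ℕ) (c : ℝ) (hc : 0 < c) (D : ℝ) (hD : D = dist x₀ x₁) (hDpos : 0 < D)
    (hf1 : ∫ ω, αf * Real.exp (-β * dist ω x₀) ∂μ = 1)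
    (hg1 : ∫ ω, αg * Real.exp (-β * dist ω x₁) ∂μ = 1)
    (hsep : ∀ ω ∈ {ω : Ω | dist ω x₀ ≤ D / (3 * β)}, 2 * D / 3 ≤ β * dist ω x₁)
    (hvol : μ {ω : Ω | dist ω x₀ ≤ D / (3 * β)} = ENNReal.ofReal (c * D ^ n))
    (hexp : D / 6 ≤ Real.exp (-D / 3) - Real.exp (-2 * D / 3)) :
    (∫ ω, (αf * Real.exp (-β * dist ω x₀)) *
        Real.log ((αf * Real.exp (-β * dist ω x₀)) /
          (αg * Real.exp (-β * dist ω x₁))) ∂μ) ≥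
      2 * αg ^ 2 * c ^ 2 * D ^ (2 * n + 2) / 36 := by
  have hαf : (0:ℝ) < αf := lt_of_lt_of_le hαg hα
  set f : Ω → ℝ := fun ω => αf * Real.exp (-β * dist ω x₀) with hfdef
  set g : Ω → ℝ := fun ω => αg * Real.exp (-β * dist ω x₁) with hgdef
  have hfpos : ∀ ω, 0 < f ω := fun ω => by positivity
  have hgpos : ∀ ω, 0 < g ω := fun ω => by positivity
  -- uniform bound on distances
  haveI : Nonempty Ω := ⟨x₀⟩
  obtain ⟨w₀, -, hw₀'⟩ := isCompact_univ.exists_isMaxOn (Set.univ_nonempty (α := Ω))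
    (((continuous_id.dist (continuous_const (y := x₀)))).continuousOn (s := Set.univ))
  obtain ⟨w₁, -, hw₁'⟩ := isCompact_univ.exists_isMaxOn (Set.univ_nonempty (α := Ω))
    (((continuous_id.dist (continuous_const (y := x₁)))).continuousOn (s := Set.univ))
  have hw₀ : ∀ ω : Ω, dist ω x₀ ≤ dist w₀ x₀ := fun ω => hw₀' (Set.mem_univ ω)
  have hw₁ : ∀ ω : Ω, dist ω x₁ ≤ dist w₁ x₁ := fun ω => hw₁' (Set.mem_univ ω)
  set M : ℝ := dist w₀ x₀ + dist w₁ x₁ with hMdef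
  have hM0 : ∀ ω, dist ω x₀ ≤ M := fun ω =>
    le_add_of_le_of_nonneg (hw₀ ω) dist_nonneg
  have hM1 : ∀ ω, dist ω x₁ ≤ M := fun ω =>
    le_add_of_nonneg_of_le dist_nonneg (hw₁ ω)
  have hMnonneg : 0 ≤ M := le_trans dist_nonneg (hM0 x₀)
  set ε : ℝ := αg * Real.exp (-β * M) with hεdef
  have hε : 0 < ε := by positivity
  have hfε : ∀ ω, ε ≤ f ω := by
    intro ω
    have h1 : Real.exp (-β * M) ≤ Real.exp (-β * dist ω x₀) :=
      Real.exp_le_exp.2 (by nlinarith [hM0 ω])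
    calc ε ≤ αg * Real.exp (-β * dist ω x₀) := by
          exact mul_le_mul_of_nonneg_left h1 hαg.le
      _ ≤ f ω := mul_le_mul_of_nonneg_right hα (Real.exp_pos _).le
  have hgε : ∀ ω, ε ≤ g ω := by
    intro ω
    exact mul_le_mul_of_nonneg_left
      (Real.exp_le_exp.2 (by nlinarith [hM1 ω])) hαg.le
  have hfub : ∀ ω, f ω ≤ αf := by
    intro ω
    have h1 : Real.exp (-β * dist ω x₀) ≤ 1 :=
      Real.exp_le_one_iff.2 (by nlinarith [dist_nonneg (x := ω) (y := x₀)])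
    calc f ω = αf * Real.exp (-β * dist ω x₀) := rfl
      _ ≤ αf * 1 := mul_le_mul_of_nonneg_left h1 hαf.le
      _ = αf := mul_one αf
  have hgub : ∀ ω, g ω ≤ αg := by
    intro ω
    have h1 : Real.exp (-β * dist ω x₁) ≤ 1 :=
      Real.exp_le_one_iff.2 (by nlinarith [dist_nonneg (x := ω) (y := x₁)])
    calc g ω = αg * Real.exp (-β * dist ω x₁) := rfl
      _ ≤ αg * 1 := mul_le_mul_of_nonneg_left h1 hαg.le
      _ = αg := mul_one αg
  -- integrability of f and g
  have hfi : Integrable f μ := by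
    by_contra h; rw [integral_undef h] at hf1; norm_num at hf1
  have hgi : Integrable g μ := by
    by_contra h; rw [integral_undef h] at hg1; norm_num at hg1
  haveI : IsFiniteMeasure μ := by
    constructor
    have hconst : Integrable (fun _ : Ω => ε) μ :=
      hfi.mono' aestronglyMeasurable_const
        (ae_of_all _ fun ω => by
          rw [Real.norm_eq_abs, abs_of_pos hε]; exact hfε ω)
    rcases integrable_const_iff.mp hconst with h | h
    · exact absurd h hε.ne'
    · exact h.measure_univ_lt_top
  have hfm : AEMeasurable f μ := hfi.aemeasurable
  have hgm : AEMeasurable g μ := hgi.aemeasurable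
  -- the functions u (difference) and h (KL integrand)
  set u : Ω → ℝ := fun ω => f ω - g ω with hudef
  have hui : Integrable u μ := hfi.sub hgi
  have hu0 : ∫ ω, u ω ∂μ = 0 := by
    rw [hudef]; rw [integral_sub hfi hgi, hf1, hg1]; ring
  set L : Ω → ℝ := fun ω => Real.log (f ω / g ω) with hLdef
  have hLm : AEMeasurable L μ := Real.measurable_log.comp_aemeasurable (hfm.div hgm)
  set Lb : ℝ := |Real.log αf| + |Real.log αg| + 2 * (β * M) with hLbdef
  have hLbound : ∀ ω, |L ω| ≤ Lb := by
    intro ω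
    have hlf : Real.log (f ω) = Real.log αf + (-β * dist ω x₀) := by
      rw [hfdef]; rw [Real.log_mul hαf.ne' (Real.exp_pos _).ne', Real.log_exp]
    have hlg : Real.log (g ω) = Real.log αg + (-β * dist ω x₁) := by
      rw [hgdef]; rw [Real.log_mul hαg.ne' (Real.exp_pos _).ne', Real.log_exp]
    have hL : L ω = Real.log (f ω) - Real.log (g ω) := by
      rw [hLdef]; exact Real.log_div (hfpos ω).ne' (hgpos ω).ne'
    rw [hL, hlf, hlg, hLbdef]
    have h0 := hM0 ω; have h1 := hM1 ω
    have h0' : 0 ≤ dist ω x₀ := dist_nonneg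
    have h1' : 0 ≤ dist ω x₁ := dist_nonneg
    rw [abs_le]
    constructor <;> nlinarith [neg_abs_le (Real.log αf), le_abs_self (Real.log αf),
      neg_abs_le (Real.log αg), le_abs_self (Real.log αg)]
  set h : Ω → ℝ := fun ω => f ω * L ω with hhdef
  have hhm : AEMeasurable h μ := hfm.mul hLm
  have hhi : Integrable h μ := by
    refine (integrable_const (αf * Lb)).mono' hhm.aestronglyMeasurable (ae_of_all _ fun ω => ?_)
    rw [Real.norm_eq_abs, hhdef]
    calc |f ω * L ω| = f ω * |L ω| := by
          rw [abs_mul, abs_of_pos (hfpos ω)]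
      _ ≤ αf * Lb := by
          have := hLbound ω
          have := hfub ω
          nlinarith [abs_nonneg (L ω), (hfpos ω).le]
  -- Cauchy–Schwarz setup
  set a : Ω → ℝ := fun ω => Real.sqrt ((2 * f ω + 4 * g ω) / 3) with hadef
  set b : Ω → ℝ := fun ω => |u ω| / a ω with hbdef
  have hden : ∀ ω, 0 < (2 * f ω + 4 * g ω) / 3 := fun ω => by
    have := hfpos ω; have := hgpos ω; linarith
  have hapos : ∀ ω, 0 < a ω := fun ω => Real.sqrt_pos.2 (hden ω)
  have ha2 : ∀ ω, a ω ^ 2 = (2 * f ω + 4 * g ω) / 3 := fun ω =>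
    Real.sq_sqrt (hden ω).le
  have hab : ∀ ω, a ω * b ω = |u ω| := fun ω =>
    mul_div_cancel₀ _ (hapos ω).ne'
  have hb2 : ∀ ω, b ω ^ 2 = 3 * u ω ^ 2 / (2 * f ω + 4 * g ω) := by
    intro ω
    rw [hbdef]
    rw [div_pow, sq_abs, ha2 ω]
    rw [div_div_eq_mul_div]
    ring
  have ham : AEMeasurable a μ :=
    Real.continuous_sqrt.measurable.comp_aemeasurable
      (((hfm.const_mul 2).add (hgm.const_mul 4)).div_const 3)
  have hbm : AEMeasurable b μ := (hui.abs.aemeasurable).div ham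
  -- integrability facts
  have ha2i : Integrable (fun ω => a ω ^ 2) μ := by
    have : (fun ω => a ω ^ 2) = fun ω => (2 * f ω + 4 * g ω) / 3 := funext ha2
    rw [this]
    exact ((hfi.const_mul 2).add (hgi.const_mul 4)).div_const 3
  have ha2int : ∫ ω, a ω ^ 2 ∂μ = 2 := by
    have : (fun ω => a ω ^ 2) = fun ω => (2 * f ω + 4 * g ω) / 3 := funext ha2
    rw [this]
    have e2 : ∫ ω, 2 * f ω ∂μ = 2 * ∫ ω, f ω ∂μ := integral_const_mul 2 f
    have e4 : ∫ ω, 4 * g ω ∂μ = 4 * ∫ ω, g ω ∂μ := integral_const_mul 4 g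
    rw [integral_div, integral_add (hfi.const_mul 2) (hgi.const_mul 4), e2, e4, hf1, hg1]
    norm_num
  have hb2i : Integrable (fun ω => b ω ^ 2) μ := by
    refine (integrable_const ((αf + αg) ^ 2 / (2 * ε))).mono'
      ((hbm.mul hbm).congr (ae_of_all _ fun ω => (pow_two (b ω)).symm)).aestronglyMeasurable
      (ae_of_all _ fun ω => ?_)
    rw [Real.norm_eq_abs, abs_of_nonneg (sq_nonneg _), hb2 ω]
    have hu_le : |u ω| ≤ αf + αg := by
      have h1 : u ω = f ω - g ω := rfl
      have := hfpos ω; have := hgpos ω; have := hfub ω; have := hgub ω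
      rw [abs_le]; constructor <;> nlinarith
    have hu2 : u ω ^ 2 ≤ (αf + αg) ^ 2 := by
      nlinarith [abs_nonneg (u ω), sq_abs (u ω)]
    have hd : 6 * ε ≤ 2 * f ω + 4 * g ω := by
      have := hfε ω; have := hgε ω; linarith
    rw [div_le_div_iff₀ (by have := hfε ω; have := hgε ω; linarith) (by linarith [hε])]
    nlinarith [hu2, hd, hε.le, sq_nonneg (αf + αg), sq_nonneg (u ω)]
  have habi : Integrable (fun ω => a ω * b ω) μ := by
    have : (fun ω => a ω * b ω) = fun ω => |u ω| := funext hab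
    rw [this]; exact hui.abs
  -- ∫ b² ≤ KL
  set KL : ℝ := ∫ ω, h ω ∂μ with hKLdef
  have hb2le : ∀ ω, b ω ^ 2 ≤ h ω - f ω + g ω := by
    intro ω
    rw [hb2 ω]
    have hkey := key_xy (f ω) (g ω) (hfpos ω) (hgpos ω)
    rw [div_le_iff₀ (by have := hfpos ω; have := hgpos ω; linarith)]
    have hhω : h ω = f ω * Real.log (f ω / g ω) := rfl
    have huω : u ω = f ω - g ω := rfl
    calc 3 * u ω ^ 2 = 3 * (f ω - g ω) ^ 2 := by rw [huω]
      _ ≤ (2 * f ω + 4 * g ω) * (f ω * Real.log (f ω / g ω) - f ω + g ω) := hkey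
      _ = (f ω * Real.log (f ω / g ω) - f ω + g ω) * (2 * f ω + 4 * g ω) := by ring
      _ = (h ω - f ω + g ω) * (2 * f ω + 4 * g ω) := by rw [hhω]
  have hb2KL : ∫ ω, b ω ^ 2 ∂μ ≤ KL := by
    have hhf : Integrable (fun ω => h ω - f ω) μ := hhi.sub hfi
    have hhfg : Integrable (fun ω => h ω - f ω + g ω) μ := hhf.add hgi
    have hmono := integral_mono hb2i hhfg hb2le
    have e1 : ∫ ω, (h ω - f ω + g ω) ∂μ =
        (∫ ω, (h ω - f ω) ∂μ) + ∫ ω, g ω ∂μ := integral_add hhf hgi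
    have e2 : ∫ ω, (h ω - f ω) ∂μ = (∫ ω, h ω ∂μ) - ∫ ω, f ω ∂μ :=
      integral_sub hhi hfi
    rw [e1, e2, hf1, hg1] at hmono
    have hKL' : ∫ ω, h ω ∂μ = KL := hKLdef.symm
    linarith [hmono]
  -- Cauchy–Schwarz: (∫ |u|)² ≤ 2 KL
  set I : ℝ := ∫ ω, |u ω| ∂μ with hIdef
  have hCS : I ^ 2 ≤ 2 * KL := by
    set lam : ℝ := I / 2 with hlamdef
    have hnn : 0 ≤ ∫ ω, (b ω - lam * a ω) ^ 2 ∂μ :=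
      integral_nonneg fun ω => sq_nonneg _
    have hexpand : (fun ω => (b ω - lam * a ω) ^ 2) =
        fun ω => (b ω ^ 2 - 2 * lam * (a ω * b ω)) + lam ^ 2 * a ω ^ 2 := by
      funext ω; ring
    rw [hexpand] at hnn
    have eab : ∫ ω, 2 * lam * (a ω * b ω) ∂μ = 2 * lam * ∫ ω, a ω * b ω ∂μ :=
      integral_const_mul _ _
    have ea2 : ∫ ω, lam ^ 2 * a ω ^ 2 ∂μ = lam ^ 2 * ∫ ω, a ω ^ 2 ∂μ :=
      integral_const_mul _ _
    have hab2 : Integrable (fun ω => 2 * lam * (a ω * b ω)) μ := habi.const_mul _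
    have hsub : Integrable (fun ω => b ω ^ 2 - 2 * lam * (a ω * b ω)) μ := hb2i.sub hab2
    have ha2c : Integrable (fun ω => lam ^ 2 * a ω ^ 2) μ := ha2i.const_mul _
    have e1 : ∫ ω, (b ω ^ 2 - 2 * lam * (a ω * b ω)) + lam ^ 2 * a ω ^ 2 ∂μ =
        (∫ ω, (b ω ^ 2 - 2 * lam * (a ω * b ω)) ∂μ) + ∫ ω, lam ^ 2 * a ω ^ 2 ∂μ :=
      integral_add hsub ha2c
    have e2 : ∫ ω, (b ω ^ 2 - 2 * lam * (a ω * b ω)) ∂μ =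
        (∫ ω, b ω ^ 2 ∂μ) - ∫ ω, 2 * lam * (a ω * b ω) ∂μ := integral_sub hb2i hab2
    rw [e1, e2, eab, ea2, ha2int] at hnn
    have habint : ∫ ω, a ω * b ω ∂μ = I := by
      rw [hIdef]; congr 1; funext ω; exact hab ω
    rw [habint] at hnn
    have : I ^ 2 / 2 ≤ ∫ ω, b ω ^ 2 ∂μ := by
      rw [hlamdef] at hnn; nlinarith [hnn]
    linarith [hb2KL]
  -- lower bound on I via Markov on the positive part
  set up : Ω → ℝ := fun ω => max (u ω) 0 with hupdef
  have hupi : Integrable up μ := hui.pos_part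
  have hIsplit : I = 2 * ∫ ω, up ω ∂μ := by
    have habs : (fun ω => |u ω|) = fun ω => 2 * up ω - u ω := by
      funext ω
      rcases le_total 0 (u ω) with hw | hw
      · rw [abs_of_nonneg hw]
        have hupω : up ω = u ω := max_eq_left hw
        rw [hupω]; ring
      · rw [abs_of_nonpos hw]
        have hupω : up ω = 0 := max_eq_right hw
        rw [hupω]; ring
    have hup2 : Integrable (fun ω => 2 * up ω) μ := hupi.const_mul 2
    have e1 : ∫ ω, (2 * up ω - u ω) ∂μ = (∫ ω, 2 * up ω ∂μ) - ∫ ω, u ω ∂μ :=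
      integral_sub hup2 hui
    have e2 : ∫ ω, 2 * up ω ∂μ = 2 * ∫ ω, up ω ∂μ := integral_const_mul _ _
    rw [hIdef, habs, e1, e2, hu0]
    ring
  set t₀ : ℝ := αg * D / 6 with ht₀def
  have ht₀pos : 0 < t₀ := by rw [ht₀def]; positivity
  have hsubset : {ω : Ω | dist ω x₀ ≤ D / (3 * β)} ⊆ {ω : Ω | t₀ ≤ up ω} := by
    intro ω hω
    have hd0 : β * dist ω x₀ ≤ D / 3 := by
      have h1 : dist ω x₀ ≤ D / (3 * β) := hω
      calc β * dist ω x₀ ≤ β * (D / (3 * β)) := mul_le_mul_of_nonneg_left h1 hβ.le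
        _ = D / 3 := by field_simp
    have hd1 : 2 * D / 3 ≤ β * dist ω x₁ := hsep ω hω
    have hflb : αg * Real.exp (-D / 3) ≤ f ω := by
      have : Real.exp (-(D / 3)) ≤ Real.exp (-β * dist ω x₀) :=
        Real.exp_le_exp.2 (by linarith)
      calc αg * Real.exp (-D / 3) = αg * Real.exp (-(D / 3)) := by
            rw [show (-D / 3 : ℝ) = -(D / 3) from by ring]
        _ ≤ αg * Real.exp (-β * dist ω x₀) := mul_le_mul_of_nonneg_left this hαg.le
        _ ≤ f ω := mul_le_mul_of_nonneg_right hα (Real.exp_pos _).le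
    have hgub' : g ω ≤ αg * Real.exp (-2 * D / 3) := by
      have : Real.exp (-β * dist ω x₁) ≤ Real.exp (-(2 * D / 3)) :=
        Real.exp_le_exp.2 (by linarith)
      calc g ω ≤ αg * Real.exp (-(2 * D / 3)) := mul_le_mul_of_nonneg_left this hαg.le
        _ = αg * Real.exp (-2 * D / 3) := by
            rw [show (-(2 * D / 3) : ℝ) = -2 * D / 3 from by ring]
    have hu_lb : t₀ ≤ u ω := by
      rw [hudef, ht₀def]
      have := mul_le_mul_of_nonneg_left hexp hαg.le
      simp only
      nlinarith [this, hflb, hgub']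
    show t₀ ≤ up ω
    rw [hupdef]
    exact le_trans hu_lb (le_max_left _ _)
  have hmarkov : t₀ * (c * D ^ n) ≤ ∫ ω, up ω ∂μ := by
    have hm := mul_meas_ge_le_integral_of_nonneg
      (ae_of_all μ fun ω => le_max_right (u ω) 0) hupi t₀
    have hμle : (μ {ω : Ω | dist ω x₀ ≤ D / (3 * β)}).toReal ≤
        (μ {ω : Ω | t₀ ≤ up ω}).toReal :=
      ENNReal.toReal_mono (measure_ne_top μ _) (measure_mono hsubset)
    have hμA : (μ {ω : Ω | dist ω x₀ ≤ D / (3 * β)}).toReal = c * D ^ n := by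
      rw [hvol, ENNReal.toReal_ofReal (by positivity)]
    calc t₀ * (c * D ^ n) = t₀ * (μ {ω : Ω | dist ω x₀ ≤ D / (3 * β)}).toReal := by
          rw [hμA]
      _ ≤ t₀ * (μ {ω : Ω | t₀ ≤ up ω}).toReal :=
          mul_le_mul_of_nonneg_left hμle ht₀pos.le
      _ ≤ ∫ ω, up ω ∂μ := hm
  -- conclude
  have hgoal : (∫ ω, f ω * Real.log (f ω / g ω) ∂μ) = KL := rfl
  show (∫ ω, f ω * Real.log (f ω / g ω) ∂μ) ≥ 2 * αg ^ 2 * c ^ 2 * D ^ (2 * n + 2) / 36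
  rw [hgoal]
  have hpow : D ^ (2 * n + 2) = (D ^ n) ^ 2 * D ^ 2 := by ring
  have hIlb : 2 * (t₀ * (c * D ^ n)) ≤ I := by
    rw [hIsplit]; linarith [hmarkov]
  have hI0 : 0 ≤ 2 * (t₀ * (c * D ^ n)) := by positivity
  have : (2 * (t₀ * (c * D ^ n))) ^ 2 ≤ I ^ 2 := by nlinarith
  rw [ge_iff_le, hpow, ht₀def] at *
  nlinarith [hCS, this]
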